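/- If T is a diskcyclic operator on a Hilbert space H, then the adjoint T* has at most one eigenvalue, and any eigenvalue of T* has modulus greater than 1. -/

import Mathlib

open Filter Topology Pointwise

/-- The disk orbit of `x` under `T`: `{α • Tⁿ x : n ≥ 0, α ∈ ℂ, |α| ≤ 1}`. -/
def diskOrbit {H : Type*} [NormedAddCommGroup H] [NormedSpace ℂ H]
    (T : H →L[ℂ] H) (x : H) : Set H :=
  {y | ∃ (n : ℕ) (α : ℂ), ‖α‖ ≤ 1 ∧ y = α • (T ^ n) x}

/-- An operator is diskcyclic if some vector has dense disk orbit. -/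
def DiskCyclic {H : Type*} [NormedAddCommGroup H] [NormedSpace ℂ H]
    (T : H →L[ℂ] H) : Prop :=
  ∃ x : H, Dense (diskOrbit T x)

local notation "⟪" x ", " y "⟫" => @inner ℂ _ _ x y

private lemma inner_pow_eig {H : Type*} [NormedAddCommGroup H] [InnerProductSpace ℂ H]
    [CompleteSpace H] (T : H →L[ℂ] H) {v : H} {μ : ℂ}
    (hv : ContinuousLinearMap.adjoint T v = μ • v) (x : H) (n : ℕ) :
    ⟪v, (T ^ n) x⟫ = (starRingEnd ℂ μ) ^ n * ⟪v, x⟫ := by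
  induction n with
  | zero => simp
  | succ n ih =>
    have h1 : (T ^ (n + 1)) x = T ((T ^ n) x) := by
      rw [pow_succ']; rfl
    rw [h1, ← ContinuousLinearMap.adjoint_inner_left, hv, inner_smul_left, ih]
    ring

private lemma not_dense_of_bounded {s : Set ℂ} {r : ℝ} (hr : 0 ≤ r)
    (hs : ∀ z ∈ s, ‖z‖ ≤ r) : ¬ Dense s := by
  intro hd
  have h1 : ((r + 1 : ℝ) : ℂ) ∈ closure s := hd _
  have h2 : closure s ⊆ Metric.closedBall 0 r :=
    closure_minimal (fun z hz => by simpa [Metric.mem_closedBall, dist_zero_right] using hs z hz)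
      Metric.isClosed_closedBall
  have h3 := h2 h1
  simp only [Metric.mem_closedBall, dist_zero_right, Complex.norm_real, Real.norm_eq_abs] at h3
  rw [abs_of_nonneg (by linarith)] at h3
  linarith

private lemma inner_cyclic_ne_zero {H : Type*} [NormedAddCommGroup H] [InnerProductSpace ℂ H]
    [CompleteSpace H] (T : H →L[ℂ] H) {v : H} {μ : ℂ} (hv0 : v ≠ 0)
    (hv : ContinuousLinearMap.adjoint T v = μ • v) {x : H} (hx : Dense (diskOrbit T x)) :
    ⟪v, x⟫ ≠ 0 := by
  intro hc
  have hsurj : Function.Surjective (innerSL ℂ v) := by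
    intro z
    refine ⟨(z / ⟪v, v⟫) • v, ?_⟩
    have hvv : ⟪v, v⟫ ≠ 0 := inner_self_ne_zero.mpr hv0
    simp only [innerSL_apply_apply, inner_smul_right]
    field_simp
  have hdense : Dense ((innerSL ℂ v) '' diskOrbit T x) :=
    hsurj.denseRange.dense_image (innerSL ℂ v).continuous hx
  refine not_dense_of_bounded le_rfl ?_ hdense
  rintro z ⟨y, ⟨n, α, hα, rfl⟩, rfl⟩
  simp only [innerSL_apply_apply, inner_smul_right, inner_pow_eig T hv, hc]
  simp

set_option maxHeartbeats 1000000 in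
theorem stmt14 {H : Type*} [NormedAddCommGroup H] [InnerProductSpace ℂ H] [CompleteSpace H]
    (T : H →L[ℂ] H) (h : DiskCyclic T) :
    (∀ μ ν : ℂ, (∃ v : H, v ≠ 0 ∧ ContinuousLinearMap.adjoint T v = μ • v) →
      (∃ v : H, v ≠ 0 ∧ ContinuousLinearMap.adjoint T v = ν • v) → μ = ν) ∧
    ∀ μ : ℂ, (∃ v : H, v ≠ 0 ∧ ContinuousLinearMap.adjoint T v = μ • v) → 1 < ‖μ‖ := by
  obtain ⟨x, hx⟩ := h
  have key : ∀ μ ν : ℂ, ‖ν‖ ≤ ‖μ‖ →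
      (∃ v : H, v ≠ 0 ∧ ContinuousLinearMap.adjoint T v = μ • v) →
      (∃ v : H, v ≠ 0 ∧ ContinuousLinearMap.adjoint T v = ν • v) → μ = ν := by
    rintro μ ν hle ⟨v, hv0, hv⟩ ⟨w, hw0, hw⟩
    by_contra hne
    set a := ⟪v, x⟫ with ha_def
    set b := ⟪w, x⟫ with hb_def
    have ha : a ≠ 0 := inner_cyclic_ne_zero T hv0 hv hx
    have hb : b ≠ 0 := inner_cyclic_ne_zero T hw0 hw hx
    have hvv : ⟪v, v⟫ ≠ 0 := inner_self_ne_zero.mpr hv0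
    set u : H := w - (⟪v, w⟫ / ⟪v, v⟫) • v with hu_def
    have hvu : ⟪v, u⟫ = 0 := by
      simp only [hu_def, inner_sub_right, inner_smul_right]
      field_simp
      ring
    have hu0 : u ≠ 0 := by
      intro huz
      have huz' : w - (⟪v, w⟫ / ⟪v, v⟫) • v = 0 := huz
      have hwcv : w = (⟪v, w⟫ / ⟪v, v⟫) • v := sub_eq_zero.mp huz'
      -- then w is an eigenvector for μ too, contradicting μ ≠ ν
      have h1 : ContinuousLinearMap.adjoint T w = μ • w := by
        rw [hwcv, map_smul, hv, smul_comm]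
      have h2 : (μ - ν) • w = 0 := by
        rw [sub_smul, h1.symm.trans hw]
        exact sub_self _
      rcases smul_eq_zero.mp h2 with h3 | h3
      · exact hne (sub_eq_zero.mp h3)
      · exact hw0 h3
    have hwu : ⟪w, u⟫ = ⟪u, u⟫ := by
      have : w = u + (⟪v, w⟫ / ⟪v, v⟫) • v := by rw [hu_def]; abel
      rw [this, inner_add_left, inner_smul_left]
      have hvu' : ⟪v, u⟫ = 0 := hvu
      rw [hvu']
      ring
    have huu : ⟪u, u⟫ ≠ 0 := inner_self_ne_zero.mpr hu0
    have hwu0 : ⟪w, u⟫ ≠ 0 := hwu ▸ huu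
    -- the joint map into ℂ × ℂ
    set g : H →L[ℂ] ℂ × ℂ := (innerSL ℂ v).prod (innerSL ℂ w) with hg_def
    have hsurj : Function.Surjective g := by
      rintro ⟨s, t⟩
      refine ⟨(s / ⟪v, v⟫) • v + ((t - (s / ⟪v, v⟫) * ⟪w, v⟫) / ⟪w, u⟫) • u, ?_⟩
      simp only [hg_def, ContinuousLinearMap.prod_apply, innerSL_apply_apply, inner_add_right,
        inner_smul_right, hvu, mul_zero, add_zero, Prod.mk.injEq]
      constructor
      · exact div_mul_cancel₀ s hvv
      · rw [div_mul_cancel₀ _ hwu0]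
        ring
    have hdense : Dense (g '' diskOrbit T x) :=
      hsurj.denseRange.dense_image g.continuous hx
    -- every point (z₁, z₂) of the image satisfies ‖z₂‖ * ‖a‖ ≤ ‖z₁‖ * ‖b‖
    have hP : ∀ z ∈ g '' diskOrbit T x, ‖(z : ℂ × ℂ).2‖ * ‖a‖ ≤ ‖z.1‖ * ‖b‖ := by
      rintro z ⟨y, ⟨n, α, hα, rfl⟩, rfl⟩
      simp only [hg_def, ContinuousLinearMap.prod_apply, innerSL_apply_apply, inner_smul_right,
        inner_pow_eig T hv, inner_pow_eig T hw]
      simp only [norm_mul, norm_pow, RCLike.norm_conj]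
      calc ‖α‖ * (‖ν‖ ^ n * ‖b‖) * ‖a‖ ≤ ‖α‖ * (‖μ‖ ^ n * ‖b‖) * ‖a‖ := by
            gcongr
        _ = ‖α‖ * (‖μ‖ ^ n * ‖a‖) * ‖b‖ := by ring
    -- get a point near (0, 1), contradiction
    have hapos : 0 < ‖a‖ := norm_pos_iff.mpr ha
    have hbpos : 0 < ‖b‖ := norm_pos_iff.mpr hb
    have hεb : 0 < ‖a‖ / (2 * ‖b‖) := by positivity
    set ε : ℝ := min (1/2) (‖a‖ / (2 * ‖b‖)) with hε_def
    have hε : 0 < ε := lt_min (by norm_num) hεb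
    obtain ⟨z, hzball, hzmem⟩ := Metric.dense_iff.mp hdense ((0 : ℂ), (1 : ℂ)) ε hε
    have hdz : max (dist z.1 0) (dist z.2 1) < ε := by
      have := Metric.mem_ball.mp hzball
      rwa [Prod.dist_eq] at this
    have hz1 : ‖z.1‖ < ε := by
      rw [← dist_zero_right]
      exact lt_of_le_of_lt (le_max_left _ _) hdz
    have hz2 : ‖z.2 - 1‖ < ε := by
      rw [← dist_eq_norm]
      exact lt_of_le_of_lt (le_max_right _ _) hdz
    have hz2' : 1 - ε ≤ ‖z.2‖ := by
      have h1 : ‖(1 : ℂ)‖ - ‖z.2‖ ≤ ‖(1 : ℂ) - z.2‖ := norm_sub_norm_le _ _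
      rw [norm_sub_rev] at h1
      simp only [norm_one] at h1
      linarith
    have hPz := hP z hzmem
    have hε1 : ε ≤ 1/2 := min_le_left _ _
    have hε2 : ε * (2 * ‖b‖) ≤ ‖a‖ := by
      have := min_le_right (1/2 : ℝ) (‖a‖ / (2 * ‖b‖))
      rw [← le_div_iff₀ (by positivity)]
      exact this
    clear_value a b u g ε
    have k1 : ‖z.1‖ * ‖b‖ < ε * ‖b‖ := mul_lt_mul_of_pos_right hz1 hbpos
    have k2 : ε * ‖b‖ ≤ ‖a‖ / 2 := by linarith
    have k3 : ‖a‖ / 2 ≤ (1 - ε) * ‖a‖ := by nlinarith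
    have k4 : (1 - ε) * ‖a‖ ≤ ‖z.2‖ * ‖a‖ := mul_le_mul_of_nonneg_right hz2' (norm_nonneg a)
    linarith
  constructor
  · intro μ ν h1 h2
    rcases le_total ‖ν‖ ‖μ‖ with hle | hle
    · exact key μ ν hle h1 h2
    · exact (key ν μ hle h2 h1).symm
  · rintro μ ⟨v, hv0, hv⟩
    by_contra hμ
    push_neg at hμ
    have ha : ⟪v, x⟫ ≠ 0 := inner_cyclic_ne_zero T hv0 hv hx
    have hsurj : Function.Surjective (innerSL ℂ v) := by
      intro z
      refine ⟨(z / ⟪v, v⟫) • v, ?_⟩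
      have hvv : ⟪v, v⟫ ≠ 0 := inner_self_ne_zero.mpr hv0
      simp only [innerSL_apply_apply, inner_smul_right]
      field_simp
    have hdense : Dense ((innerSL ℂ v) '' diskOrbit T x) :=
      hsurj.denseRange.dense_image (innerSL ℂ v).continuous hx
    refine not_dense_of_bounded (norm_nonneg ⟪v, x⟫) ?_ hdense
    rintro z ⟨y, ⟨n, α, hα, rfl⟩, rfl⟩
    simp only [innerSL_apply_apply, inner_smul_right, inner_pow_eig T hv, norm_mul, norm_pow,
      RCLike.norm_conj]
    calc ‖α‖ * (‖μ‖ ^ n * ‖⟪v, x⟫‖) ≤ 1 * (1 * ‖⟪v, x⟫‖) := by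
          have h1 : ‖μ‖ ^ n ≤ 1 := pow_le_one₀ (norm_nonneg μ) hμ
          gcongr
      _ = ‖⟪v, x⟫‖ := by ring
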